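/- Assume n ≤ m. The quasi-invariant q¹ = (z^N + w^N)^{2n+1} is annihilated by the Calogero–Moser operator 𝓛₁, i.e. the polynomial identity (∏_{k=0}^{2N−1}(ε^k·w − z))·∂z∂w q¹ = ∑_{k=0}^{2N−1} m_k·(∏_{0≤j≤2N−1, j≠k}(ε^j·w − z))·(ε^k·∂z q¹ − ∂w q¹) holds in R. -/

import Mathlib

open MvPolynomial Finset

noncomputable section

/-- The polynomial ring `R = ℂ[z,w]`. -/
abbrev R2 : Type := MvPolynomial (Fin 2) ℂ

/-- `z`, the first variable. -/
def zP : R2 := X 0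

/-- `w`, the second variable (playing the role of `z̄`). -/
def wP : R2 := X 1

/-- `ε = exp(πi/N)`, a primitive `2N`-th root of unity. -/
def eps (N : ℕ) : ℂ := Complex.exp ((Real.pi : ℂ) * Complex.I / (N : ℂ))

/-- The reflection `σⱼ : z ↦ ε^j w, w ↦ ε^{-j} z` as a `ℂ`-algebra endomorphism. -/
def dihRefl (N j : ℕ) : R2 →ₐ[ℂ] R2 :=
  aeval (fun k : Fin 2 => if k = 0 then C (eps N ^ j) * X 1 else C (eps N ^ (-(j : ℤ))) * X 0)

/-- The multiplicity `mⱼ`: `m` for even `j`, `n` for odd `j`. -/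
def mult (m n j : ℕ) : ℕ := if Even j then m else n

/-- Quasi-invariance for the dihedral system `I₂(2N)` with multiplicities `(m,n)`. -/
def IsQuasiInv (N m n : ℕ) (p : R2) : Prop :=
  ∀ j < 2 * N, (zP - C (eps N ^ j) * wP) ^ (2 * mult m n j + 1) ∣ dihRefl N j p - p

/-- `p` is annihilated by the Calogero–Moser operator
`𝓛₁ = 4∂z∂w − 4∑ₖ mₖ(ε^k ∂z − ∂w)/(ε^k w − z)`, expressed as a polynomial identity
after clearing denominators. -/
def AnnL1 (N m n : ℕ) (p : R2) : Prop :=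
  (∏ k ∈ Finset.range (2 * N), (C (eps N ^ k) * wP - zP)) *
      (pderiv (0 : Fin 2) (pderiv (1 : Fin 2) p)) =
    ∑ k ∈ Finset.range (2 * N),
      C ((mult m n k : ℕ) : ℂ) *
        (∏ j ∈ (Finset.range (2 * N)).erase k, (C (eps N ^ j) * wP - zP)) *
        (C (eps N ^ k) * pderiv (0 : Fin 2) p - pderiv (1 : Fin 2) p)

lemma eps_prim (N : ℕ) (hN : 1 ≤ N) : IsPrimitiveRoot (eps N) (2 * N) := by
  have h : eps N = Complex.exp (2 * Real.pi * Complex.I / ((2 * N : ℕ) : ℂ)) := by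
    unfold eps
    congr 1
    have : ((2 * N : ℕ) : ℂ) = 2 * (N : ℂ) := by push_cast; ring
    rw [this]
    have hNne : (N : ℂ) ≠ 0 := Nat.cast_ne_zero.2 (by omega)
    field_simp
  rw [h]
  exact Complex.isPrimitiveRoot_exp _ (by omega)

lemma eps_pow_N (N : ℕ) (hN : 1 ≤ N) : eps N ^ N = -1 := by
  unfold eps
  rw [← Complex.exp_nat_mul]
  have hNne : (N : ℂ) ≠ 0 := Nat.cast_ne_zero.2 (by omega)
  rw [show (N : ℂ) * ((Real.pi : ℂ) * Complex.I / (N : ℂ)) = Real.pi * Complex.I by field_simp]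
  exact Complex.exp_pi_mul_I

lemma prim_prod_range {M : ℕ} {e : ℂ} (h : IsPrimitiveRoot e M) (hM : 0 < M) (x y : ℂ) :
    ∏ k ∈ range M, (x - e ^ k * y) = x ^ M - y ^ M := by
  have himg : (range M).image (e ^ ·) = Polynomial.nthRootsFinset M (1 : ℂ) := by
    apply Finset.eq_of_subset_of_card_le
    · intro t ht
      simp only [mem_image, mem_range] at ht
      obtain ⟨k, hk, rfl⟩ := ht
      rw [Polynomial.mem_nthRootsFinset hM, ← pow_mul, mul_comm k M, pow_mul, h.pow_eq_one, one_pow]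
    · rw [h.card_nthRootsFinset, Finset.card_image_of_injOn]
      · simp
      · intro a ha b hb hab
        exact h.pow_inj (mem_range.1 (by simpa using ha)) (mem_range.1 (by simpa using hb)) hab
  rw [IsPrimitiveRoot.pow_sub_pow_eq_prod_sub_mul x y hM h, ← himg, Finset.prod_image]
  intro a ha b hb hab
  exact h.pow_inj (mem_range.1 ha) (mem_range.1 hb) hab

lemma full_prod (N : ℕ) (hN : 1 ≤ N) :
    (∏ k ∈ range (2 * N), (C (eps N ^ k) * wP - zP)) = zP ^ (2 * N) - wP ^ (2 * N) := by
  apply MvPolynomial.funext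
  intro x
  simp only [map_prod, map_sub, map_mul, map_pow, eval_C, eval_X, zP, wP]
  have h := prim_prod_range (eps_prim N hN) (by omega) (x 0) (x 1)
  calc ∏ k ∈ range (2 * N), (eps N ^ k * x 1 - x 0)
      = ∏ k ∈ range (2 * N), (-1 : ℂ) * (x 0 - eps N ^ k * x 1) := by
        apply Finset.prod_congr rfl; intro k _; ring
    _ = (-1) ^ (2 * N) * ∏ k ∈ range (2 * N), (x 0 - eps N ^ k * x 1) := by
        rw [Finset.prod_mul_distrib, Finset.prod_const, Finset.card_range]
    _ = x 0 ^ (2 * N) - x 1 ^ (2 * N) := by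
        rw [h, (by omega : 2 * N = 2 * N), pow_mul]; simp

lemma factor_ne (N k : ℕ) : (C (eps N ^ k) * wP - zP : R2) ≠ 0 := by
  intro h
  have h2 := congrArg (eval fun i : Fin 2 => if i = 0 then (1 : ℂ) else 0) h
  simp [zP, wP] at h2

lemma erase_prod (N : ℕ) (hN : 1 ≤ N) {k : ℕ} (hk : k ∈ range (2 * N)) :
    (∏ j ∈ (range (2 * N)).erase k, (C (eps N ^ j) * wP - zP))
      = -(∑ i ∈ range (2 * N), zP ^ i * (C (eps N ^ k) * wP) ^ (2 * N - 1 - i)) := by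
  apply mul_right_cancel₀ (factor_ne N k)
  rw [Finset.prod_erase_mul _ _ hk, full_prod N hN]
  have hg := geom_sum₂_mul (R := R2) zP (C (eps N ^ k) * wP) (2 * N)
  have hC : (C (eps N ^ k) * wP : R2) ^ (2 * N) = wP ^ (2 * N) := by
    rw [mul_pow, ← map_pow, ← pow_mul, mul_comm k (2 * N), pow_mul,
      (eps_prim N hN).pow_eq_one, one_pow, map_one, one_mul]
  rw [neg_mul, show (C (eps N ^ k) * wP - zP : R2) = -(zP - C (eps N ^ k) * wP) by ring,
    mul_neg, neg_neg, hg, hC]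

lemma pd1 (N n : ℕ) :
    pderiv (1 : Fin 2) ((zP ^ N + wP ^ N) ^ (2 * n + 1)) =
      (((2 * n + 1) * N : ℕ) : R2) * wP ^ (N - 1) * (zP ^ N + wP ^ N) ^ (2 * n) := by
  rw [pderiv_pow]
  simp only [map_add, pderiv_pow, zP, wP, pderiv_X_self,
    pderiv_X_of_ne (show (0 : Fin 2) ≠ 1 by decide)]
  push_cast
  ring

lemma pd01 (N n : ℕ) :
    pderiv (0 : Fin 2) (pderiv (1 : Fin 2) ((zP ^ N + wP ^ N) ^ (2 * n + 1))) =
      (((2 * n + 1) * (2 * n) * N * N : ℕ) : R2) * zP ^ (N - 1) * wP ^ (N - 1) *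
        (zP ^ N + wP ^ N) ^ (2 * n - 1) := by
  rw [pd1]
  simp only [pderiv_mul, map_add, pderiv_pow, zP, wP, pderiv_X_self, Derivation.map_natCast,
    pderiv_X_of_ne (show (1 : Fin 2) ≠ 0 by decide),
    pderiv_X_of_ne (show (0 : Fin 2) ≠ 1 by decide)]
  push_cast
  ring

lemma sum_range_even_odd (f : ℕ → ℂ) (N : ℕ) :
    ∑ k ∈ range (2 * N), f k = ∑ l ∈ range N, f (2 * l) + ∑ l ∈ range N, f (2 * l + 1) := by
  induction N with
  | zero => simp
  | succ p ih =>
    rw [show 2 * (p + 1) = 2 * p + 1 + 1 by ring, Finset.sum_range_succ, Finset.sum_range_succ,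
      ih, Finset.sum_range_succ (fun l => f (2 * l)), Finset.sum_range_succ (fun l => f (2 * l + 1))]
    ring

def Asum (N m n t : ℕ) : ℂ := ∑ k ∈ range (2 * N), ((mult m n k : ℕ) : ℂ) * (eps N ^ t) ^ k

lemma eps2_prim (N : ℕ) (hN : 1 ≤ N) : IsPrimitiveRoot (eps N ^ 2) N :=
  (eps_prim N hN).pow (by omega) (by ring)

lemma Asum_eq (N m n t : ℕ) :
    Asum N m n t = ((m : ℂ) + n * eps N ^ t) * ∑ l ∈ range N, ((eps N ^ 2) ^ t) ^ l := by
  unfold Asum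
  rw [sum_range_even_odd]
  have h1 : ∀ l : ℕ, ((mult m n (2 * l) : ℕ) : ℂ) = (m : ℂ) := by
    intro l; simp [mult]
  have h2 : ∀ l : ℕ, ((mult m n (2 * l + 1) : ℕ) : ℂ) = (n : ℂ) := by
    intro l; simp [mult, Nat.even_add_one, parity_simps]
  have h3 : ∀ l : ℕ, (eps N ^ t) ^ (2 * l) = ((eps N ^ 2) ^ t) ^ l := by
    intro l; rw [← pow_mul, ← pow_mul, ← pow_mul]; congr 1; ring
  have h4 : ∀ l : ℕ, (eps N ^ t) ^ (2 * l + 1) = eps N ^ t * ((eps N ^ 2) ^ t) ^ l := by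
    intro l; rw [pow_succ, h3, mul_comm]
  simp only [h1, h2, h3, h4]
  have h5 : ∀ l : ℕ, (n : ℂ) * (eps N ^ t * ((eps N ^ 2) ^ t) ^ l)
      = ((n : ℂ) * eps N ^ t) * ((eps N ^ 2) ^ t) ^ l := fun l => by ring
  rw [Finset.sum_congr rfl fun l _ => h5 l, ← Finset.mul_sum, ← Finset.mul_sum, ← add_mul]

lemma Asum_not_dvd (N m n t : ℕ) (hN : 1 ≤ N) (h : ¬ N ∣ t) : Asum N m n t = 0 := by
  rw [Asum_eq]
  have hx1 : (eps N ^ 2) ^ t ≠ 1 := by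
    rw [Ne, (eps2_prim N hN).pow_eq_one_iff_dvd]
    exact h
  have hxN : ((eps N ^ 2) ^ t) ^ N = 1 := by
    rw [pow_right_comm, (eps2_prim N hN).pow_eq_one, one_pow]
  rw [geom_sum_eq hx1, hxN, sub_self, zero_div, mul_zero]

lemma Asum_zero (N m n : ℕ) : Asum N m n 0 = (N : ℂ) * ((m : ℂ) + n) := by
  rw [Asum_eq]; simp [mul_comm]

lemma Asum_N (N m n : ℕ) (hN : 1 ≤ N) : Asum N m n N = (N : ℂ) * ((m : ℂ) - n) := by
  have h2 : (eps N ^ 2) ^ N = 1 := by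
    rw [pow_right_comm, eps_pow_N N hN]; norm_num
  rw [Asum_eq, eps_pow_N N hN, h2]
  simp
  ring

lemma Asum_2N (N m n : ℕ) (hN : 1 ≤ N) : Asum N m n (2 * N) = (N : ℂ) * ((m : ℂ) + n) := by
  have h1 : eps N ^ (2 * N) = 1 := (eps_prim N hN).pow_eq_one
  have h2 : (eps N ^ 2) ^ (2 * N) = 1 := by rw [pow_right_comm, h1, one_pow]
  rw [Asum_eq, h1, h2]
  simp
  ring

lemma S_eval (N m n : ℕ) (hN : 1 ≤ N) (z w : ℂ) :
    ∑ k ∈ range (2 * N), ((mult m n k : ℕ) : ℂ) *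
        ((∑ i ∈ range (2 * N), z ^ i * (eps N ^ k * w) ^ (2 * N - 1 - i)) *
          (eps N ^ k * z ^ (N - 1) - w ^ (N - 1)))
      = 2 * (n : ℂ) * N * z ^ (N - 1) * w ^ (N - 1) * (w ^ N - z ^ N) := by
  have key : ∀ k ∈ range (2 * N), ∀ i ∈ range (2 * N),
      ((mult m n k : ℕ) : ℂ) * (z ^ i * (eps N ^ k * w) ^ (2 * N - 1 - i) *
          (eps N ^ k * z ^ (N - 1) - w ^ (N - 1)))
        = z ^ i * w ^ (2 * N - 1 - i) *
            (z ^ (N - 1) * (((mult m n k : ℕ) : ℂ) * (eps N ^ (2 * N - i)) ^ k)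
              - w ^ (N - 1) * (((mult m n k : ℕ) : ℂ) * (eps N ^ (2 * N - 1 - i)) ^ k)) := by
    intro k hk i hi
    rw [mem_range] at hi
    have h1 : (eps N ^ k * w) ^ (2 * N - 1 - i)
        = (eps N ^ (2 * N - 1 - i)) ^ k * w ^ (2 * N - 1 - i) := by
      rw [mul_pow, pow_right_comm]
    have h2 : (eps N ^ (2 * N - i)) ^ k = (eps N ^ (2 * N - 1 - i)) ^ k * eps N ^ k := by
      rw [← mul_pow, ← pow_succ, show 2 * N - 1 - i + 1 = 2 * N - i by omega]
    rw [h1, h2]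
    ring
  calc ∑ k ∈ range (2 * N), ((mult m n k : ℕ) : ℂ) *
        ((∑ i ∈ range (2 * N), z ^ i * (eps N ^ k * w) ^ (2 * N - 1 - i)) *
          (eps N ^ k * z ^ (N - 1) - w ^ (N - 1)))
      = ∑ k ∈ range (2 * N), ∑ i ∈ range (2 * N), ((mult m n k : ℕ) : ℂ) *
          (z ^ i * (eps N ^ k * w) ^ (2 * N - 1 - i) *
            (eps N ^ k * z ^ (N - 1) - w ^ (N - 1))) := by
        refine Finset.sum_congr rfl fun k hk => ?_
        rw [Finset.sum_mul, Finset.mul_sum]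
    _ = ∑ k ∈ range (2 * N), ∑ i ∈ range (2 * N), z ^ i * w ^ (2 * N - 1 - i) *
            (z ^ (N - 1) * (((mult m n k : ℕ) : ℂ) * (eps N ^ (2 * N - i)) ^ k)
              - w ^ (N - 1) * (((mult m n k : ℕ) : ℂ) * (eps N ^ (2 * N - 1 - i)) ^ k)) := by
        refine Finset.sum_congr rfl fun k hk => Finset.sum_congr rfl fun i hi => key k hk i hi
    _ = ∑ i ∈ range (2 * N), ∑ k ∈ range (2 * N), z ^ i * w ^ (2 * N - 1 - i) *
            (z ^ (N - 1) * (((mult m n k : ℕ) : ℂ) * (eps N ^ (2 * N - i)) ^ k)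
              - w ^ (N - 1) * (((mult m n k : ℕ) : ℂ) * (eps N ^ (2 * N - 1 - i)) ^ k)) :=
        Finset.sum_comm
    _ = ∑ i ∈ range (2 * N), z ^ i * w ^ (2 * N - 1 - i) *
            (z ^ (N - 1) * Asum N m n (2 * N - i) - w ^ (N - 1) * Asum N m n (2 * N - 1 - i)) := by
        refine Finset.sum_congr rfl fun i hi => ?_
        rw [← Finset.mul_sum]
        congr 1
        rw [Finset.sum_sub_distrib, ← Finset.mul_sum, ← Finset.mul_sum]
        rfl
    _ = (∑ i ∈ range (2 * N), z ^ i * w ^ (2 * N - 1 - i) * z ^ (N - 1) * Asum N m n (2 * N - i))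
          - ∑ i ∈ range (2 * N), z ^ i * w ^ (2 * N - 1 - i) * w ^ (N - 1) *
              Asum N m n (2 * N - 1 - i) := by
        rw [← Finset.sum_sub_distrib]
        exact Finset.sum_congr rfl fun i hi => by ring
    _ = 2 * (n : ℂ) * N * z ^ (N - 1) * w ^ (N - 1) * (w ^ N - z ^ N) := by
        have hg : (∑ i ∈ range (2 * N), z ^ i * w ^ (2 * N - 1 - i) * z ^ (N - 1) *
              Asum N m n (2 * N - i))
            = z ^ 0 * w ^ (2 * N - 1) * z ^ (N - 1) * Asum N m n (2 * N)
              + z ^ N * w ^ (N - 1) * z ^ (N - 1) * Asum N m n N := by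
          rw [← Finset.sum_subset (Finset.insert_subset (by simp; omega)
            (Finset.singleton_subset_iff.2 (by simp; omega)) : ({0, N} : Finset ℕ) ⊆ range (2 * N))]
          · rw [Finset.sum_pair (by omega : (0 : ℕ) ≠ N),
              show 2 * N - (0:ℕ) = 2 * N by omega, show 2 * N - 1 - (0:ℕ) = 2 * N - 1 by omega,
              show 2 * N - N = N by omega, show 2 * N - 1 - N = N - 1 by omega]
          · intro i hi hni
            rw [mem_range] at hi
            simp only [Finset.mem_insert, Finset.mem_singleton] at hni
            push_neg at hni
            rw [Asum_not_dvd N m n _ hN, mul_zero]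
            rintro ⟨d, hd⟩
            have hd2 : d ≤ 2 := by
              by_contra h'
              have : N * 3 ≤ N * d := Nat.mul_le_mul_left N (by omega)
              omega
            interval_cases d <;> omega
        have hh : (∑ i ∈ range (2 * N), z ^ i * w ^ (2 * N - 1 - i) * w ^ (N - 1) *
              Asum N m n (2 * N - 1 - i))
            = z ^ (N - 1) * w ^ N * w ^ (N - 1) * Asum N m n N
              + z ^ (2 * N - 1) * w ^ 0 * w ^ (N - 1) * Asum N m n 0 := by
          rw [← Finset.sum_subset (Finset.insert_subset (by simp; omega)
            (Finset.singleton_subset_iff.2 (by simp; omega)) :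
              ({N - 1, 2 * N - 1} : Finset ℕ) ⊆ range (2 * N))]
          · rw [Finset.sum_pair (by omega : N - 1 ≠ 2 * N - 1),
              show 2 * N - 1 - (N - 1) = N by omega, show 2 * N - 1 - (2 * N - 1) = 0 by omega]
          · intro i hi hni
            rw [mem_range] at hi
            simp only [Finset.mem_insert, Finset.mem_singleton] at hni
            push_neg at hni
            rw [Asum_not_dvd N m n _ hN, mul_zero]
            rintro ⟨d, hd⟩
            have hd2 : d ≤ 2 := by
              by_contra h'
              have : N * 3 ≤ N * d := Nat.mul_le_mul_left N (by omega)
              omega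
            interval_cases d <;> omega
        rw [hg, hh, Asum_zero, Asum_N N m n hN, Asum_2N N m n hN,
          show 2 * N - 1 = N + (N - 1) by omega, pow_add, pow_add]
        ring

lemma pd0 (N n : ℕ) :
    pderiv (0 : Fin 2) ((zP ^ N + wP ^ N) ^ (2 * n + 1)) =
      (((2 * n + 1) * N : ℕ) : R2) * zP ^ (N - 1) * (zP ^ N + wP ^ N) ^ (2 * n) := by
  rw [pderiv_pow]
  simp only [map_add, pderiv_pow, zP, wP, pderiv_X_self,
    pderiv_X_of_ne (show (1 : Fin 2) ≠ 0 by decide)]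
  push_cast
  ring

theorem q1_mHarmonic_L1 (N m n : ℕ) (hN : 1 ≤ N) (hnm : n ≤ m) :
    AnnL1 N m n ((zP ^ N + wP ^ N) ^ (2 * n + 1)) := by
  unfold AnnL1
  rw [pd01, pd1, pd0, full_prod N hN,
    Finset.sum_congr rfl (fun k hk => by rw [erase_prod N hN hk])]
  apply MvPolynomial.funext
  intro x
  simp only [map_sum, map_mul, map_sub, map_add, map_neg, map_pow, map_prod, eval_C, eval_X,
    map_natCast, zP, wP]
  have hR : (∑ k ∈ Finset.range (2 * N),
        (((mult m n k : ℕ) : ℂ) *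
            -(∑ i ∈ Finset.range (2 * N), x 0 ^ i * (eps N ^ k * x 1) ^ (2 * N - 1 - i))) *
          (eps N ^ k * ((((2 * n + 1) * N : ℕ) : ℂ) * x 0 ^ (N - 1) * (x 0 ^ N + x 1 ^ N) ^ (2 * n)) -
            (((2 * n + 1) * N : ℕ) : ℂ) * x 1 ^ (N - 1) * (x 0 ^ N + x 1 ^ N) ^ (2 * n)))
      = (-((((2 * n + 1) * N : ℕ) : ℂ)) * (x 0 ^ N + x 1 ^ N) ^ (2 * n)) *
          ∑ k ∈ Finset.range (2 * N), ((mult m n k : ℕ) : ℂ) *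
            ((∑ i ∈ Finset.range (2 * N), x 0 ^ i * (eps N ^ k * x 1) ^ (2 * N - 1 - i)) *
              (eps N ^ k * x 0 ^ (N - 1) - x 1 ^ (N - 1))) := by
    rw [Finset.mul_sum]
    exact Finset.sum_congr rfl fun k hk => by ring
  rw [hR, S_eval N m n hN]
  push_cast
  rcases Nat.eq_zero_or_pos n with hn | hn
  · subst hn
    norm_num
  · have hu : (x 0 ^ N + x 1 ^ N) ^ (2 * n - 1) * (x 0 ^ N + x 1 ^ N)
        = (x 0 ^ N + x 1 ^ N) ^ (2 * n) := by
      rw [← pow_succ]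
      congr 1
      omega
    have hz : x 0 ^ (2 * N) = x 0 ^ N * x 0 ^ N := by rw [two_mul, pow_add]
    have hw : x 1 ^ (2 * N) = x 1 ^ N * x 1 ^ N := by rw [two_mul, pow_add]
    rw [hz, hw]
    linear_combination (2 * (n : ℂ) + 1) * (2 * (n : ℂ)) * (N : ℂ) ^ 2 *
      x 0 ^ (N - 1) * x 1 ^ (N - 1) * (x 0 ^ N - x 1 ^ N) * hu
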